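/- Bound on the probability that the empirical Gram matrix is singular: under the same orthonormality assumption P(ħħ') = I_m, the probability that P_n(ħħ') is not invertible is at most n^{-1} P(q²) with q = ħ'ħ. -/

import Mathlib

open MeasureTheory Matrix

open Finset ProbabilityTheory
open scoped ENNReal

lemma aux_unit {m : ℕ} (A : Matrix (Fin m) (Fin m) ℝ)
    (h : ∑ j, ∑ k, (A j k - (if j = k then (1:ℝ) else 0)) ^ 2 < 1) :
    IsUnit A.det := by
  rw [isUnit_iff_ne_zero]
  intro hdet
  obtain ⟨v, hv, hAv⟩ := Matrix.exists_mulVec_eq_zero_iff.2 hdet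
  set s : ℝ := ∑ j, v j ^ 2 with hs
  have hspos : 0 < s := by
    obtain ⟨j, hj⟩ : ∃ j, v j ≠ 0 := by
      by_contra hc; push_neg at hc; exact hv (funext hc)
    exact Finset.sum_pos' (fun i _ => sq_nonneg _) ⟨j, Finset.mem_univ j, by positivity⟩
  set B : Fin m → Fin m → ℝ := fun j k => (if j = k then 1 else 0) - A j k with hB
  have key : ∀ j, v j = ∑ k, B j k * v k := by
    intro j
    have h0 : ∑ k, A j k * v k = 0 := by
      have := congrFun hAv j
      simpa [Matrix.mulVec, dotProduct] using this
    have h1 : ∑ k, (if j = k then (1:ℝ) else 0) * v k = v j := by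
      simp [ite_mul]
    calc v j = ∑ k, (if j = k then (1:ℝ) else 0) * v k - ∑ k, A j k * v k := by
          rw [h0, sub_zero, h1]
      _ = ∑ k, B j k * v k := by
          rw [← Finset.sum_sub_distrib]
          exact Finset.sum_congr rfl fun k _ => by simp only [hB]; ring
  have hBsum : ∑ j, ∑ k, B j k ^ 2 < 1 := by
    have he : ∑ j, ∑ k, B j k ^ 2 = ∑ j, ∑ k, (A j k - (if j = k then (1:ℝ) else 0)) ^ 2 :=
      Finset.sum_congr rfl fun j _ => Finset.sum_congr rfl fun k _ => by simp only [hB]; ring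
    rw [he]; exact h
  have h1 : s ^ 2 ≤ (∑ j, ∑ k, B j k ^ 2) * s ^ 2 := by
    calc s ^ 2 = (∑ j, v j * ∑ k, B j k * v k) ^ 2 := by
          rw [hs]; congr 1
          exact Finset.sum_congr rfl fun j _ => by rw [← key j, sq]
      _ ≤ (∑ j, v j ^ 2) * (∑ j, (∑ k, B j k * v k) ^ 2) :=
          Finset.sum_mul_sq_le_sq_mul_sq _ _ _
      _ ≤ s * ∑ j, (∑ k, B j k ^ 2) * s := by
          gcongr with j _
          calc (∑ k, B j k * v k) ^ 2 ≤ (∑ k, B j k ^ 2) * (∑ k, v k ^ 2) :=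
                Finset.sum_mul_sq_le_sq_mul_sq _ _ _
            _ = (∑ k, B j k ^ 2) * s := rfl
      _ = (∑ j, ∑ k, B j k ^ 2) * s ^ 2 := by rw [← Finset.sum_mul]; ring
  have hs2 : 0 < s ^ 2 := by positivity
  have := mul_lt_mul_of_pos_right hBsum hs2
  linarith

lemma aux_moment {S Ω : Type*} [MeasurableSpace S] [MeasurableSpace Ω]
    (P : Measure S) [IsProbabilityMeasure P] (Q : Measure Ω) [IsProbabilityMeasure Q]
    {n : ℕ} (hn : 0 < n) (f : S → ℝ) (hfm : Measurable f) (hf2 : MemLp f 2 P)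
    (X : Fin n → Ω → S) (hXmeas : ∀ i, Measurable (X i))
    (hlaw : ∀ i, Measure.map (X i) Q = P)
    (hindep : ProbabilityTheory.iIndepFun X Q)
    (c : ℝ) (hc : ∫ x, f x ∂P = c) :
    ∫ ω, ((n : ℝ)⁻¹ * ∑ i, f (X i ω) - c) ^ 2 ∂Q ≤ (n : ℝ)⁻¹ * ∫ x, f x ^ 2 ∂P := by
  have hn' : (n : ℝ) ≠ 0 := Nat.cast_ne_zero.2 hn.ne'
  have hmp : ∀ i, MeasurePreserving (X i) Q P := fun i => ⟨hXmeas i, hlaw i⟩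
  have hW2 : ∀ i, MemLp (f ∘ X i) 2 Q := fun i => hf2.comp_measurePreserving (hmp i)
  have hint : ∀ (i : Fin n) (g : S → ℝ), AEStronglyMeasurable g P →
      (∫ ω, g (X i ω) ∂Q) = ∫ x, g x ∂P := by
    intro i g hg
    rw [← hlaw i] at hg ⊢
    exact (integral_map (hXmeas i).aemeasurable hg).symm
  set T : Ω → ℝ := fun ω => ∑ i, f (X i ω) with hT
  have hTsum : T = ∑ i, f ∘ X i := by ext ω; simp [hT]
  have hT2 : MemLp T 2 Q := by rw [hTsum]; exact memLp_finset_sum' _ fun i _ => hW2 i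
  have hET : ∫ ω, T ω ∂Q = n * c := by
    calc ∫ ω, T ω ∂Q = ∑ i : Fin n, ∫ ω, f (X i ω) ∂Q :=
          integral_finset_sum _ fun i _ => (hW2 i).integrable one_le_two
      _ = ∑ _i : Fin n, c := Finset.sum_congr rfl fun i _ => by
          rw [hint i f hf2.aestronglyMeasurable, hc]
      _ = n * c := by simp [mul_comm]
  have hvar : variance T Q = ∑ i, variance (f ∘ X i) Q := by
    rw [hTsum]
    exact IndepFun.variance_sum (fun i _ => hW2 i)
      (fun i _ j hj hij => ((hindep.comp (fun _ => f) fun _ => hfm).indepFun hij))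
  have hvar_le : ∀ i, variance (f ∘ X i) Q ≤ ∫ x, f x ^ 2 ∂P := by
    intro i
    have h1 := variance_le_expectation_sq (μ := Q) (hW2 i).aestronglyMeasurable
    have h2 : (∫ ω, ((f ∘ X i) ^ 2) ω ∂Q) = ∫ x, f x ^ 2 ∂P := by
      simp only [Pi.pow_apply, Function.comp_apply]
      exact hint i (fun x => f x ^ 2) ((hfm.pow_const 2).aestronglyMeasurable)
    calc variance (f ∘ X i) Q ≤ ∫ ω, ((f ∘ X i) ^ 2) ω ∂Q := h1
      _ = ∫ x, f x ^ 2 ∂P := h2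
  have hve : variance T Q = ∫ ω, (T ω - ∫ ω', T ω' ∂Q) ^ 2 ∂Q := by
    rw [variance_eq_integral hT2.1.aemeasurable]
  have hrw : ∀ ω, ((n : ℝ)⁻¹ * T ω - c) ^ 2 = (n : ℝ)⁻¹ ^ 2 * (T ω - ∫ ω', T ω' ∂Q) ^ 2 := by
    intro ω
    rw [hET]
    field_simp
  calc ∫ ω, ((n : ℝ)⁻¹ * ∑ i, f (X i ω) - c) ^ 2 ∂Q
      = ∫ ω, (n : ℝ)⁻¹ ^ 2 * (T ω - ∫ ω', T ω' ∂Q) ^ 2 ∂Q := by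
        exact integral_congr_ae (Filter.Eventually.of_forall fun ω => hrw ω)
    _ = (n : ℝ)⁻¹ ^ 2 * ∫ ω, (T ω - ∫ ω', T ω' ∂Q) ^ 2 ∂Q := integral_const_mul _ _
    _ = (n : ℝ)⁻¹ ^ 2 * ∑ i, variance (f ∘ X i) Q := by rw [← hve, hvar]
    _ ≤ (n : ℝ)⁻¹ ^ 2 * ∑ _i : Fin n, ∫ x, f x ^ 2 ∂P := by
        have h3 : (0:ℝ) ≤ (n : ℝ)⁻¹ ^ 2 := by positivity
        exact mul_le_mul_of_nonneg_left (Finset.sum_le_sum fun i _ => hvar_le i) h3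
    _ = (n : ℝ)⁻¹ * ∫ x, f x ^ 2 ∂P := by
        simp only [Finset.sum_const, Finset.card_univ, Fintype.card_fin, nsmul_eq_mul]
        field_simp

/-- Bound on the probability that the empirical Gram matrix of orthonormal control
variates is singular: `P(P_n(ħħ') not invertible) ≤ n⁻¹ P(q²)` with `q = ħ'ħ`. -/
theorem stmt12 {S Ω : Type*} [MeasurableSpace S] [MeasurableSpace Ω]
    (P : Measure S) [IsProbabilityMeasure P] (Q : Measure Ω) [IsProbabilityMeasure Q]
    {n m : ℕ} (hn : 0 < n) (hb : Fin m → S → ℝ)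
    (hmeas : ∀ j, Measurable (hb j)) (hL4 : ∀ j, MemLp (hb j) 4 P)
    (hmean : ∀ j, ∫ x, hb j x ∂P = 0)
    (horth : ∀ j k, ∫ x, hb j x * hb k x ∂P = if j = k then 1 else 0)
    (X : Fin n → Ω → S) (hXmeas : ∀ i, Measurable (X i))
    (hlaw : ∀ i, Measure.map (X i) Q = P)
    (hindep : ProbabilityTheory.iIndepFun X Q) :
    (Q {ω | ¬ IsUnit (Matrix.of fun j k : Fin m =>
        (n : ℝ)⁻¹ * ∑ i, hb j (X i ω) * hb k (X i ω)).det}).toReal ≤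
      (n : ℝ)⁻¹ * ∫ x, (∑ j, hb j x ^ 2) ^ 2 ∂P := by
  classical
  have hF2 : ∀ j k : Fin m, MemLp (fun x => hb j x * hb k x) 2 P := by
    intro j k
    have h24 : (1 : ℝ≥0∞) / 2 = 1 / 4 + 1 / 4 := by
      rw [ENNReal.div_add_div_same, ENNReal.div_eq_div_iff] <;> norm_num
    have := (hL4 k).smul (hL4 j) (r := 2) (hpqr := ⟨by simpa only [one_div] using h24.symm⟩)
    exact this
  have hFm : ∀ j k : Fin m, Measurable (fun x => hb j x * hb k x) :=
    fun j k => (hmeas j).mul (hmeas k)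
  -- the empirical entries
  set Sn : Fin m → Fin m → Ω → ℝ :=
    fun j k ω => (n : ℝ)⁻¹ * ∑ i, hb j (X i ω) * hb k (X i ω) with hSn
  have hSn2 : ∀ j k, MemLp (Sn j k) 2 Q := by
    intro j k
    have hsum : MemLp (fun ω => ∑ i, hb j (X i ω) * hb k (X i ω)) 2 Q := by
      have h := memLp_finset_sum' (μ := Q) Finset.univ
        (f := fun i : Fin n => (fun x => hb j x * hb k x) ∘ X i)
        (fun i _ => (hF2 j k).comp_measurePreserving ⟨hXmeas i, hlaw i⟩)
      have : (∑ i : Fin n, (fun x => hb j x * hb k x) ∘ X i)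
          = fun ω => ∑ i, hb j (X i ω) * hb k (X i ω) := by
        ext ω; simp
      rwa [this] at h
    exact hsum.const_mul _
  set g : Fin m → Fin m → Ω → ℝ :=
    fun j k ω => (Sn j k ω - if j = k then 1 else 0) ^ 2 with hg
  have hgint : ∀ j k, Integrable (g j k) Q := by
    intro j k
    have h1 : MemLp (fun ω => Sn j k ω - if j = k then 1 else 0) 2 Q := by
      have := (hSn2 j k).sub (memLp_const (μ := Q) (if j = k then (1:ℝ) else 0))
      exact this
    exact h1.integrable_sq
  set Z : Ω → ℝ := fun ω => ∑ j, ∑ k, g j k ω with hZ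
  have hZint : Integrable Z Q := by
    apply integrable_finset_sum
    intro j _
    exact integrable_finset_sum _ fun k _ => hgint j k
  -- Markov + inclusion
  have hsub : {ω | ¬ IsUnit (Matrix.of fun j k : Fin m =>
        (n : ℝ)⁻¹ * ∑ i, hb j (X i ω) * hb k (X i ω)).det} ⊆ {ω | 1 ≤ Z ω} := by
    intro ω hω
    by_contra hlt
    apply hω
    apply aux_unit
    have hlt' : Z ω < 1 := lt_of_not_ge fun hc => hlt hc
    simpa [hZ, hg, hSn, Matrix.of_apply] using hlt'
  have hmarkov := mul_meas_ge_le_integral_of_nonneg (μ := Q)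
    (Filter.Eventually.of_forall fun ω => by
      have : ∀ j ∈ Finset.univ, ∀ k ∈ Finset.univ, (0:ℝ) ≤ g j k ω :=
        fun j _ k _ => sq_nonneg _
      exact Finset.sum_nonneg fun j hj => Finset.sum_nonneg fun k hk => this j hj k hk)
    hZint 1
  rw [one_mul] at hmarkov
  have hmono : (Q {ω | ¬ IsUnit (Matrix.of fun j k : Fin m =>
        (n : ℝ)⁻¹ * ∑ i, hb j (X i ω) * hb k (X i ω)).det}).toReal
      ≤ (Q {ω | 1 ≤ Z ω}).toReal :=
    ENNReal.toReal_mono (measure_ne_top Q _) (measure_mono hsub)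
  -- bound the integral of Z
  have hZbound : ∫ ω, Z ω ∂Q ≤ (n : ℝ)⁻¹ * ∫ x, (∑ j, hb j x ^ 2) ^ 2 ∂P := by
    have hsplit : ∫ ω, Z ω ∂Q = ∑ j, ∑ k, ∫ ω, g j k ω ∂Q := by
      rw [integral_finset_sum _ fun j _ => integrable_finset_sum _ fun k _ => hgint j k]
      exact Finset.sum_congr rfl fun j _ => integral_finset_sum _ fun k _ => hgint j k
    have hterm : ∀ j k, ∫ ω, g j k ω ∂Q
        ≤ (n : ℝ)⁻¹ * ∫ x, (hb j x * hb k x) ^ 2 ∂P := by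
      intro j k
      exact aux_moment P Q hn (fun x => hb j x * hb k x) (hFm j k) (hF2 j k)
        X hXmeas hlaw hindep _ (horth j k)
    have hsum2 : ∑ j, ∑ k, (n : ℝ)⁻¹ * ∫ x, (hb j x * hb k x) ^ 2 ∂P
        = (n : ℝ)⁻¹ * ∫ x, (∑ j, hb j x ^ 2) ^ 2 ∂P := by
      have hswap : ∀ j : Fin m, ∑ k, ∫ x, (hb j x * hb k x) ^ 2 ∂P
          = ∫ x, ∑ k, (hb j x * hb k x) ^ 2 ∂P :=
        fun j => (integral_finset_sum _ fun k _ => (hF2 j k).integrable_sq).symm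
      have hswap2 : ∑ j, ∫ x, ∑ k, (hb j x * hb k x) ^ 2 ∂P
          = ∫ x, ∑ j, ∑ k, (hb j x * hb k x) ^ 2 ∂P :=
        (integral_finset_sum _ fun j _ =>
          integrable_finset_sum _ fun k _ => (hF2 j k).integrable_sq).symm
      have hpt : ∀ x, ∑ j, ∑ k, (hb j x * hb k x) ^ 2 = (∑ j, hb j x ^ 2) ^ 2 := by
        intro x
        rw [sq (∑ j, hb j x ^ 2), Finset.sum_mul_sum]
        exact Finset.sum_congr rfl fun j _ => Finset.sum_congr rfl fun k _ => by ring
      calc ∑ j, ∑ k, (n : ℝ)⁻¹ * ∫ x, (hb j x * hb k x) ^ 2 ∂P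
          = (n : ℝ)⁻¹ * ∑ j, ∑ k, ∫ x, (hb j x * hb k x) ^ 2 ∂P := by
            rw [Finset.mul_sum]
            exact Finset.sum_congr rfl fun j _ => by rw [Finset.mul_sum]
        _ = (n : ℝ)⁻¹ * ∫ x, ∑ j, ∑ k, (hb j x * hb k x) ^ 2 ∂P := by
            congr 1
            rw [← hswap2]
            exact Finset.sum_congr rfl fun j _ => hswap j
        _ = (n : ℝ)⁻¹ * ∫ x, (∑ j, hb j x ^ 2) ^ 2 ∂P := by
            congr 1
            exact integral_congr_ae (Filter.Eventually.of_forall fun x => hpt x)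
    calc ∫ ω, Z ω ∂Q = ∑ j, ∑ k, ∫ ω, g j k ω ∂Q := hsplit
      _ ≤ ∑ j, ∑ k, (n : ℝ)⁻¹ * ∫ x, (hb j x * hb k x) ^ 2 ∂P :=
          Finset.sum_le_sum fun j _ => Finset.sum_le_sum fun k _ => hterm j k
      _ = (n : ℝ)⁻¹ * ∫ x, (∑ j, hb j x ^ 2) ^ 2 ∂P := hsum2
  exact hmono.trans (hmarkov.trans hZbound)
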